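/- For pure qubit states with unit Bloch vectors r₁, r₂, r₃, the real part of Tr(ρ₁ρ₂ρ₃), namely x = (1 + ⟨r₁,r₂⟩ + ⟨r₂,r₃⟩ + ⟨r₁,r₃⟩)/4, ranges over the interval [-1/8, 1]. -/

import Mathlib

open Real

noncomputable def vv (a b : ℝ) : EuclideanSpace ℝ (Fin 3) :=
  (WithLp.equiv 2 (Fin 3 → ℝ)).symm ![a, b, 0]

lemma vv_norm (a b : ℝ) : ‖vv a b‖ = Real.sqrt (a ^ 2 + b ^ 2) := by
  simp [vv, EuclideanSpace.norm_eq, Fin.sum_univ_three, sq_abs]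

lemma vv_inner (a b c d : ℝ) : (inner ℝ (vv a b) (vv c d) : ℝ) = a * c + b * d := by
  simp [vv, PiLp.inner_apply, Fin.sum_univ_three, RCLike.inner_apply]
  ring

theorem stmt_8 :
    {x : ℝ | ∃ r₁ r₂ r₃ : EuclideanSpace ℝ (Fin 3),
        ‖r₁‖ = 1 ∧ ‖r₂‖ = 1 ∧ ‖r₃‖ = 1 ∧
        x = (1 + (inner ℝ r₁ r₂ : ℝ) + (inner ℝ r₂ r₃ : ℝ) + (inner ℝ r₁ r₃ : ℝ)) / 4} =
      Set.Icc (-(1 / 8) : ℝ) 1 := by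
  ext x
  simp only [Set.mem_setOf_eq, Set.mem_Icc]
  constructor
  · rintro ⟨r₁, r₂, r₃, h₁, h₂, h₃, rfl⟩
    have h12 : (inner ℝ r₁ r₂ : ℝ) ≤ 1 := by
      have := real_inner_le_norm r₁ r₂; rw [h₁, h₂] at this; linarith
    have h23 : (inner ℝ r₂ r₃ : ℝ) ≤ 1 := by
      have := real_inner_le_norm r₂ r₃; rw [h₂, h₃] at this; linarith
    have h13 : (inner ℝ r₁ r₃ : ℝ) ≤ 1 := by
      have := real_inner_le_norm r₁ r₃; rw [h₁, h₃] at this; linarith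
    have hs : (0 : ℝ) ≤ inner ℝ (r₁ + r₂ + r₃) (r₁ + r₂ + r₃) := real_inner_self_nonneg
    have hexp : (inner ℝ (r₁ + r₂ + r₃) (r₁ + r₂ + r₃) : ℝ) =
        3 + 2 * (inner ℝ r₁ r₂ : ℝ) + 2 * (inner ℝ r₂ r₃ : ℝ) + 2 * (inner ℝ r₁ r₃ : ℝ) := by
      simp only [inner_add_left, inner_add_right]
      rw [real_inner_self_eq_norm_sq, real_inner_self_eq_norm_sq,
        real_inner_self_eq_norm_sq, h₁, h₂, h₃, real_inner_comm r₂ r₁,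
        real_inner_comm r₃ r₁, real_inner_comm r₃ r₂]
      ring
    rw [hexp] at hs
    constructor <;> linarith
  · rintro ⟨hl, hu⟩
    set c : ℝ := (-1 + Real.sqrt (1 + 8 * x)) / 2 with hc
    have h8 : (0 : ℝ) ≤ 1 + 8 * x := by linarith
    have hsq : Real.sqrt (1 + 8 * x) ^ 2 = 1 + 8 * x := Real.sq_sqrt h8
    have hsnn : 0 ≤ Real.sqrt (1 + 8 * x) := Real.sqrt_nonneg _
    have hsle : Real.sqrt (1 + 8 * x) ≤ 3 := by
      nlinarith [Real.sq_sqrt h8]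
    have hc1 : c ≤ 1 := by rw [hc]; linarith
    have hc2 : -1 ≤ c := by rw [hc]; linarith
    have hcsq : c ^ 2 ≤ 1 := by nlinarith
    set s : ℝ := Real.sqrt (1 - c ^ 2) with hs
    have hssq : s ^ 2 = 1 - c ^ 2 := Real.sq_sqrt (by linarith)
    refine ⟨vv c s, vv c (-s), vv 1 0, ?_, ?_, ?_, ?_⟩
    · rw [vv_norm]
      rw [show c ^ 2 + s ^ 2 = 1 by rw [hssq]; ring]
      exact Real.sqrt_one
    · rw [vv_norm]
      rw [show c ^ 2 + (-s) ^ 2 = 1 by rw [neg_pow, hssq]; ring]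
      exact Real.sqrt_one
    · rw [vv_norm]
      rw [show (1:ℝ) ^ 2 + 0 ^ 2 = 1 by ring]
      exact Real.sqrt_one
    · rw [vv_inner, vv_inner, vv_inner]
      have hcx : c ^ 2 + c = 2 * x := by
        rw [hc]; nlinarith
      nlinarith [hssq]
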